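/- For every nonnegative integer n, all real x, y, and all real t with |t| < 1, the identity ∑_{m=0}^{∞} L_{n,m}(x,y) · t^m = (e^{-ty/(1-t)} / (1-t)^{n+1}) · L_n(x + ty/(1-t)) holds, where L_n is the classical Laguerre polynomial and the series converges. -/

import Mathlib

open Finset

lemma choose_le_two_pow' (a b : ℕ) : a.choose b ≤ 2 ^ a := by
  rcases le_or_gt b a with h | h
  · calc a.choose b ≤ ∑ m ∈ range (a+1), a.choose m :=
        Finset.single_le_sum (fun i _ => Nat.zero_le _) (mem_range.mpr (Nat.lt_succ_of_le h))
    _ = 2 ^ a := Nat.sum_range_choose a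
  · rw [Nat.choose_eq_zero_of_lt h]; exact Nat.zero_le _

lemma hasSum_choose_exp (j : ℕ) (z : ℝ) :
    HasSum (fun i : ℕ => (i.choose j : ℝ) * z ^ i / i.factorial)
      (z ^ j / j.factorial * Real.exp z) := by
  have h0 : HasSum (fun i : ℕ => z ^ i / i.factorial) (Real.exp z) := by
    rw [Real.exp_eq_exp_ℝ]; exact NormedSpace.expSeries_div_hasSum_exp z
  have h1 := h0.mul_left (z ^ j / j.factorial)
  have h2 : ∀ i : ℕ, (((i + j).choose j : ℝ)) * z ^ (i + j) / (i + j).factorial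
      = z ^ j / j.factorial * (z ^ i / i.factorial) := by
    intro i
    have hf : (((i+j).factorial : ℝ)) = ((i+j).choose j) * i.factorial * j.factorial := by
      exact_mod_cast (Nat.add_choose_mul_factorial_mul_factorial i j).symm
    have c1 : ((i+j).choose j : ℝ) ≠ 0 :=
      Nat.cast_ne_zero.mpr (Nat.choose_pos (Nat.le_add_left j i)).ne'
    rw [hf, pow_add]
    have f1 : (i.factorial : ℝ) ≠ 0 := Nat.cast_ne_zero.mpr i.factorial_ne_zero
    have f2 : (j.factorial : ℝ) ≠ 0 := Nat.cast_ne_zero.mpr j.factorial_ne_zero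
    field_simp
  have h3 : HasSum (fun i : ℕ => ((i + j).choose j : ℝ) * z ^ (i + j) / (i + j).factorial)
      (z ^ j / j.factorial * Real.exp z) := by
    simpa only [h2] using h1
  have h4 := (hasSum_nat_add_iff
    (f := fun i : ℕ => (i.choose j : ℝ) * z ^ i / i.factorial) j).mp h3
  have hz : ∑ i ∈ range j, ((i.choose j : ℝ) * z ^ i / i.factorial) = 0 :=
    Finset.sum_eq_zero fun i hi => by
      rw [Nat.choose_eq_zero_of_lt (mem_range.mp hi)]; simp
  rwa [hz, add_zero] at h4

lemma vandermonde_shift (n s : ℕ) (hs : s ≤ n) (i : ℕ) :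
    (n + i).choose (n - s) = ∑ j ∈ range (n + 1), n.choose (s + j) * i.choose j := by
  have h1 : (n + i).choose (n - s) = (n + i).choose (s + i) := by
    rw [← Nat.choose_symm (show s + i ≤ n + i by omega)]
    congr 1; omega
  rw [h1, Nat.add_choose_eq, Finset.Nat.sum_antidiagonal_eq_sum_range_succ_mk]
  simp only []
  have h2 : (s + i).succ = s + (i + 1) := by omega
  rw [h2, Finset.sum_range_add]
  have h3 : ∑ a ∈ range s, n.choose a * i.choose (s + i - a) = 0 :=
    Finset.sum_eq_zero fun a ha => by
      rw [Nat.choose_eq_zero_of_lt (show i < s + i - a by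
        have := mem_range.mp ha; omega)]; simp
  rw [h3, zero_add]
  have h4 : ∀ j ∈ range (i + 1),
      n.choose (s + j) * i.choose (s + i - (s + j)) = n.choose (s + j) * i.choose j := by
    intro j hj
    have hji := mem_range.mp hj
    have : s + i - (s + j) = i - j := by omega
    rw [this, Nat.choose_symm (by omega)]
  rw [Finset.sum_congr rfl h4]
  have key : ∀ M : ℕ, M ≤ n + i + 2 → (∀ j, M ≤ j → n.choose (s + j) * i.choose j = 0) →
      ∑ j ∈ range M, n.choose (s + j) * i.choose j
        = ∑ j ∈ range (n + i + 2), n.choose (s + j) * i.choose j := by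
    intro M h hM
    exact Finset.sum_subset (Finset.range_subset_range.mpr h)
      (fun j _ hj => hM j (by simpa using hj))
  rw [key (i+1) (by omega) (fun j hj => by
      rw [Nat.choose_eq_zero_of_lt (show i < j by omega)]; simp),
    key (n+1) (by omega) (fun j hj => by
      rw [Nat.choose_eq_zero_of_lt (show n < s + j by omega)]; simp)]

lemma hasSum_lag_exp (n s : ℕ) (hs : s ≤ n) (w : ℝ) :
    HasSum (fun i : ℕ => ((n + i).choose (n - s) : ℝ) * w ^ i / i.factorial)
      (Real.exp w * ∑ j ∈ range (n + 1), (n.choose (s + j) : ℝ) * w ^ j / j.factorial) := by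
  have h : ∀ j ∈ range (n+1), HasSum
      (fun i : ℕ => (n.choose (s+j) : ℝ) * ((i.choose j : ℝ) * w ^ i / i.factorial))
      ((n.choose (s+j) : ℝ) * (w ^ j / j.factorial * Real.exp w)) :=
    fun j _ => (hasSum_choose_exp j w).mul_left _
  have h2 := hasSum_sum h
  have hfun : ∀ i : ℕ, ((n + i).choose (n - s) : ℝ) * w ^ i / i.factorial
      = ∑ j ∈ range (n+1), (n.choose (s+j) : ℝ) * ((i.choose j : ℝ) * w ^ i / i.factorial) := by
    intro i
    rw [vandermonde_shift n s hs i]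
    push_cast
    rw [Finset.sum_mul, Finset.sum_div]
    exact Finset.sum_congr rfl fun j _ => by ring
  have hval : Real.exp w * ∑ j ∈ range (n + 1), (n.choose (s + j) : ℝ) * w ^ j / j.factorial
      = ∑ j ∈ range (n+1), (n.choose (s+j) : ℝ) * (w ^ j / j.factorial * Real.exp w) := by
    rw [Finset.mul_sum]
    exact Finset.sum_congr rfl fun j _ => by ring
  rw [hval]
  simpa only [← hfun] using h2

set_option maxHeartbeats 2000000 in
lemma key_s (n s : ℕ) (hs : s ≤ n) (x y t : ℝ) (ht : |t| < 1) :
    HasSum (fun m : ℕ => (∑ i ∈ range (m+1),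
        ((-1:ℝ)^(i+s) / ((Nat.factorial i) * (Nat.factorial s))) *
          ((m+n).choose (m-i)) * ((n+i).choose (n-s)) * x^s * y^i) * t^m)
      ((-1:ℝ)^s * x^s / (Nat.factorial s) / (1-t)^(n+1) * (Real.exp (-(t*y/(1-t))) *
        ∑ j ∈ range (n+1), (n.choose (s+j) : ℝ) * (-(t*y/(1-t)))^j / j.factorial)) := by
  have habs := abs_lt.mp ht
  have h1t : (0:ℝ) < 1 - t := by linarith [habs.2]
  have h1t' : (1:ℝ) - t ≠ 0 := ne_of_gt h1t
  have h1a : (0:ℝ) < 1 - |t| := by linarith [ht]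
  have h1a' : (1:ℝ) - |t| ≠ 0 := ne_of_gt h1a
  set w : ℝ := -(t*y/(1-t)) with hw
  set K : ℝ := (-1:ℝ)^s * x^s / (Nat.factorial s) / (1-t)^(n+1) with hK
  set cc : ℕ → ℝ := fun i => ((-1:ℝ)^(i+s) / ((Nat.factorial i) * (Nat.factorial s))) *
      ((n+i).choose (n-s)) * x^s * y^i * t^i with hcc
  set F : ℕ × ℕ → ℝ := fun p => cc p.1 * (((n + p.1 + p.2).choose p.2 : ℝ) * t ^ p.2) with hF
  have e0 : ∀ i k : ℕ, (k + (n+i)).choose (n+i) = (n+i+k).choose k := by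
    intro i k
    rw [Nat.add_comm k (n+i), Nat.choose_symm_add]
  have hA : ∀ i : ℕ, HasSum (fun k : ℕ => (((n + i + k).choose k : ℝ)) * t ^ k)
      (1 / (1 - t) ^ (n + i + 1)) := by
    intro i
    have h := hasSum_choose_mul_geometric_of_norm_lt_one (𝕜 := ℝ) (n + i)
      (r := t) (by rwa [Real.norm_eq_abs])
    simpa only [e0 i] using h
  have hAabs : ∀ i : ℕ, HasSum (fun k : ℕ => (((n + i + k).choose k : ℝ)) * |t| ^ k)
      (1 / (1 - |t|) ^ (n + i + 1)) := by
    intro i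
    have h := hasSum_choose_mul_geometric_of_norm_lt_one (𝕜 := ℝ) (n + i)
      (r := |t|) (by rwa [Real.norm_eq_abs, abs_abs])
    simpa only [e0 i] using h
  have hfib : ∀ i : ℕ, HasSum (fun k : ℕ => F (i, k)) (cc i * (1 / (1 - t) ^ (n + i + 1))) :=
    fun i => (hA i).mul_left (cc i)
  have hNfib : ∀ i : ℕ, HasSum (fun k : ℕ => ‖F (i, k)‖)
      (|cc i| * (1 / (1 - |t|) ^ (n + i + 1))) := by
    intro i
    have heq : (fun k : ℕ => ‖F (i, k)‖)
        = fun k : ℕ => |cc i| * (((n+i+k).choose k : ℝ) * |t|^k) := by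
      funext k
      simp [hF, Real.norm_eq_abs, abs_mul, abs_pow, Nat.abs_cast]
    rw [heq]
    exact (hAabs i).mul_left _
  have hccabs : ∀ i : ℕ, |cc i| = ((n+i).choose (n-s) : ℝ) /
      ((Nat.factorial i) * (Nat.factorial s)) * |x|^s * |y|^i * |t|^i := by
    intro i
    simp only [hcc, abs_mul, abs_div, abs_pow, abs_neg, abs_one, one_pow, Nat.abs_cast]
    ring
  have hrow : Summable (fun i : ℕ => |cc i| * (1 / (1 - |t|) ^ (n + i + 1))) := by
    set v : ℝ := 2 * (|y| * |t| / (1 - |t|)) with hv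
    set D : ℝ := |x|^s / (Nat.factorial s) / (1-|t|)^(n+1) * 2^n with hD
    have hvsum : Summable (fun i : ℕ => D * (v ^ i / i.factorial)) := by
      have hexp : HasSum (fun i : ℕ => v ^ i / i.factorial) (Real.exp v) := by
        rw [Real.exp_eq_exp_ℝ]; exact NormedSpace.expSeries_div_hasSum_exp v
      exact hexp.summable.mul_left D
    apply Summable.of_nonneg_of_le (fun i => by positivity) _ hvsum
    intro i
    have hC : ((n+i).choose (n-s) : ℝ) ≤ 2^n * 2^i := by
      have h := choose_le_two_pow' (n+i) (n-s)
      calc ((n+i).choose (n-s) : ℝ) ≤ ((2:ℕ)^(n+i) : ℝ) := by exact_mod_cast h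
        _ = 2^n * 2^i := by push_cast; rw [pow_add]
    have e1 : ((1:ℝ)-|t|)^(n+i+1) = (1-|t|)^(n+1) * (1-|t|)^i := by
      rw [← pow_add]; congr 1; omega
    have e2 : v ^ i = 2^i * (|y|^i * |t|^i / (1-|t|)^i) := by
      rw [hv, mul_pow, div_pow, mul_pow]
    rw [hccabs i, e1, e2, hD]
    have hE0 : (0:ℝ) ≤ |x|^s * |y|^i * |t|^i /
        ((Nat.factorial i : ℝ) * (Nat.factorial s) * ((1-|t|)^(n+1) * (1-|t|)^i)) := by
      positivity
    calc ((n+i).choose (n-s) : ℝ) / ((Nat.factorial i) * (Nat.factorial s)) * |x|^s * |y|^i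
          * |t|^i * (1 / ((1-|t|)^(n+1) * (1-|t|)^i))
        = ((n+i).choose (n-s) : ℝ) * (|x|^s * |y|^i * |t|^i /
          ((Nat.factorial i : ℝ) * (Nat.factorial s) * ((1-|t|)^(n+1) * (1-|t|)^i))) := by
          have f1 : ((Nat.factorial i : ℝ)) ≠ 0 := Nat.cast_ne_zero.mpr i.factorial_ne_zero
          have f2 : ((Nat.factorial s : ℝ)) ≠ 0 := Nat.cast_ne_zero.mpr s.factorial_ne_zero
          field_simp
      _ ≤ (2^n * 2^i) * (|x|^s * |y|^i * |t|^i /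
          ((Nat.factorial i : ℝ) * (Nat.factorial s) * ((1-|t|)^(n+1) * (1-|t|)^i))) :=
          mul_le_mul_of_nonneg_right hC hE0
      _ = |x|^s / (Nat.factorial s) / (1-|t|)^(n+1) * 2^n *
          (2^i * (|y|^i * |t|^i / (1-|t|)^i) / i.factorial) := by
          have f1 : ((Nat.factorial i : ℝ)) ≠ 0 := Nat.cast_ne_zero.mpr i.factorial_ne_zero
          have f2 : ((Nat.factorial s : ℝ)) ≠ 0 := Nat.cast_ne_zero.mpr s.factorial_ne_zero
          field_simp
  have hFsum : Summable F := by
    apply Summable.of_norm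
    rw [summable_prod_of_nonneg (f := fun p => ‖F p‖) (fun p => norm_nonneg _)]
    refine ⟨fun i => (hNfib i).summable, ?_⟩
    have heq : (fun i : ℕ => ∑' k, ‖F (i, k)‖)
        = fun i => |cc i| * (1 / (1 - |t|) ^ (n + i + 1)) :=
      funext fun i => (hNfib i).tsum_eq
    rw [heq]
    exact hrow
  have h2 : HasSum (fun i : ℕ => cc i * (1 / (1 - t) ^ (n + i + 1)))
      (K * (Real.exp w * ∑ j ∈ range (n+1), (n.choose (s+j) : ℝ) * w^j / j.factorial)) := by
    have hLag := (hasSum_lag_exp n s hs w).mul_left K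
    have heq : (fun i : ℕ => K * (((n + i).choose (n - s) : ℝ) * w ^ i / i.factorial))
        = fun i : ℕ => cc i * (1 / (1 - t) ^ (n + i + 1)) := by
      funext i
      have e1 : ((1:ℝ)-t)^(n+i+1) = (1-t)^(n+1) * (1-t)^i := by
        rw [← pow_add]; congr 1; omega
      have e2 : w ^ i = (-1:ℝ)^i * (t^i * y^i / (1-t)^i) := by
        rw [hw, neg_pow, div_pow, mul_pow]
      have e3 : (-1:ℝ)^(i+s) = (-1:ℝ)^i * (-1:ℝ)^s := pow_add _ _ _
      have f1 : ((Nat.factorial i : ℝ)) ≠ 0 := Nat.cast_ne_zero.mpr i.factorial_ne_zero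
      have f2 : ((Nat.factorial s : ℝ)) ≠ 0 := Nat.cast_ne_zero.mpr s.factorial_ne_zero
      have p1 : ((1:ℝ)-t)^(n+1) ≠ 0 := pow_ne_zero _ h1t'
      have p2 : ((1:ℝ)-t)^i ≠ 0 := pow_ne_zero _ h1t'
      simp only [hK, hcc]
      rw [e1, e2, e3]
      field_simp
    rw [← heq]
    exact hLag
  have hFT : HasSum F
      (K * (Real.exp w * ∑ j ∈ range (n+1), (n.choose (s+j) : ℝ) * w^j / j.factorial)) := by
    have hiter : HasSum (fun i : ℕ => cc i * (1 / (1 - t) ^ (n + i + 1))) (∑' p, F p) :=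
      hFsum.hasSum.prod_fiberwise hfib
    have := hiter.unique h2
    exact this ▸ hFsum.hasSum
  have hsig : HasSum (fun q : (Σ m : ℕ, Finset.HasAntidiagonal.antidiagonal m) => F q.2)
      (K * (Real.exp w * ∑ j ∈ range (n+1), (n.choose (s+j) : ℝ) * w^j / j.factorial)) :=
    (Finset.HasAntidiagonal.sigmaAntidiagonalEquivProd.hasSum_iff).mpr hFT
  have hant : HasSum (fun m : ℕ => ∑ p ∈ Finset.HasAntidiagonal.antidiagonal m, F p)
      (K * (Real.exp w * ∑ j ∈ range (n+1), (n.choose (s+j) : ℝ) * w^j / j.factorial)) := by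
    apply hsig.sigma
    intro m
    have h := hasSum_fintype (fun c : (Finset.HasAntidiagonal.antidiagonal m : Finset (ℕ×ℕ)) => F c)
    rwa [Finset.sum_coe_sort] at h
  have hfin : (fun m : ℕ => ∑ p ∈ Finset.HasAntidiagonal.antidiagonal m, F p)
      = fun m : ℕ => (∑ i ∈ range (m+1),
        ((-1:ℝ)^(i+s) / ((Nat.factorial i) * (Nat.factorial s))) *
          ((m+n).choose (m-i)) * ((n+i).choose (n-s)) * x^s * y^i) * t^m := by
    funext m
    rw [Finset.Nat.sum_antidiagonal_eq_sum_range_succ_mk, Finset.sum_mul]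
    refine Finset.sum_congr rfl fun i hi => ?_
    have him := mem_range.mp hi
    have e1 : n + i + (m - i) = m + n := by omega
    have e2 : t ^ i * t ^ (m - i) = t ^ m := by rw [← pow_add]; congr 1; omega
    simp only [hF, hcc]
    rw [e1, ← e2]
    ring
  rw [← hfin]
  exact hant

lemma poly_id (n : ℕ) (x u : ℝ) :
    ∑ s ∈ range (n+1), ((-1:ℝ)^s * x^s / (Nat.factorial s) *
      ∑ j ∈ range (n+1), (n.choose (s+j) : ℝ) * (-u)^j / j.factorial)
    = ∑ j ∈ range (n+1), (-1:ℝ)^j / j.factorial * ((n.choose (n-j) : ℝ)) * (x+u)^j := by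
  have hR : ∑ j ∈ range (n+1), (-1:ℝ)^j / j.factorial * ((n.choose (n-j) : ℝ)) * (x+u)^j
      = ∑ j ∈ range (n+1), ∑ s ∈ range (n+1),
        (-1:ℝ)^j / j.factorial * (n.choose j : ℝ) * ((x^s * u^(j-s)) * (j.choose s : ℝ)) := by
    refine Finset.sum_congr rfl fun j hj => ?_
    have hjn := mem_range.mp hj
    rw [Nat.choose_symm (by omega : j ≤ n), add_pow, Finset.mul_sum]
    refine Finset.sum_subset (Finset.range_subset_range.mpr (by omega : j+1 ≤ n+1)) ?_
    intro s _ hs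
    have hjs : j < s := by simpa using hs
    rw [Nat.choose_eq_zero_of_lt hjs]
    simp
  rw [hR, Finset.sum_comm]
  refine Finset.sum_congr rfl fun s hsr => ?_
  have hsn := mem_range.mp hsr
  have hz : ∀ j ∈ range (s + (n+1)), j ∉ range (n+1) →
      (-1:ℝ)^j / j.factorial * (n.choose j : ℝ) * ((x^s * u^(j-s)) * (j.choose s : ℝ)) = 0 := by
    intro j _ hj
    rw [Nat.choose_eq_zero_of_lt (show n < j by simpa using hj)]
    simp
  rw [Finset.sum_subset (Finset.range_subset_range.mpr (by omega : n+1 ≤ s + (n+1))) hz]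
  rw [Finset.sum_range_add (fun j => (-1:ℝ)^j / j.factorial * (n.choose j : ℝ) *
      ((x^s * u^(j-s)) * (j.choose s : ℝ))) s (n+1)]
  have h0 : ∑ j ∈ range s, (-1:ℝ)^j / j.factorial * (n.choose j : ℝ) *
      ((x^s * u^(j-s)) * (j.choose s : ℝ)) = 0 :=
    Finset.sum_eq_zero fun j hj => by
      rw [Nat.choose_eq_zero_of_lt (mem_range.mp hj)]; simp
  rw [h0, zero_add, Finset.mul_sum]
  refine Finset.sum_congr rfl fun k hk => ?_
  have e1 : s + k - s = k := by omega
  have e2 : ((s+k).factorial : ℝ) = ((s+k).choose s : ℝ) * s.factorial * k.factorial := by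
    have h := Nat.add_choose_mul_factorial_mul_factorial k s
    have h' : (s+k).choose s * s.factorial * k.factorial = (s+k).factorial := by
      rw [Nat.add_comm s k, ← h]; ring
    exact_mod_cast h'.symm
  have f1 : ((Nat.factorial s : ℝ)) ≠ 0 := Nat.cast_ne_zero.mpr s.factorial_ne_zero
  have f2 : ((Nat.factorial k : ℝ)) ≠ 0 := Nat.cast_ne_zero.mpr k.factorial_ne_zero
  have f3 : (((s+k).choose s : ℝ)) ≠ 0 :=
    Nat.cast_ne_zero.mpr (Nat.choose_pos (Nat.le_add_right s k)).ne'
  rw [e1, e2, pow_add, neg_pow u]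
  field_simp

noncomputable def L2 (n m : ℕ) (x y : ℝ) : ℝ :=
  ∑ i ∈ Finset.range (m+1), ∑ s ∈ Finset.range (n+1),
    ((-1:ℝ)^(i+s) / ((Nat.factorial i) * (Nat.factorial s))) *
      ((m+n).choose (m-i)) * ((n+i).choose (n-s)) * x^s * y^i


noncomputable def Lag (n α : ℕ) (x : ℝ) : ℝ :=
  ∑ j ∈ Finset.range (n+1), ((-1:ℝ)^j / (Nat.factorial j)) * ((n+α).choose (n-j)) * x^j

theorem stmt9 (n : ℕ) (x y t : ℝ) (ht : |t| < 1) :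
    HasSum (fun m : ℕ => L2 n m x y * t^m)
      (Real.exp (-t*y/(1-t)) / (1-t)^(n+1) * Lag n 0 (x + t*y/(1-t))) := by
  have hk : ∀ s ∈ range (n+1), HasSum (fun m : ℕ => (∑ i ∈ range (m+1),
      ((-1:ℝ)^(i+s) / ((Nat.factorial i) * (Nat.factorial s))) *
        ((m+n).choose (m-i)) * ((n+i).choose (n-s)) * x^s * y^i) * t^m)
      ((-1:ℝ)^s * x^s / (Nat.factorial s) / (1-t)^(n+1) * (Real.exp (-(t*y/(1-t))) *
        ∑ j ∈ range (n+1), (n.choose (s+j) : ℝ) * (-(t*y/(1-t)))^j / j.factorial)) :=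
    fun s hsr => key_s n s (by have := mem_range.mp hsr; omega) x y t ht
  have H := hasSum_sum hk
  have hfun : (fun m : ℕ => L2 n m x y * t^m) = fun m : ℕ => ∑ s ∈ range (n+1),
      (∑ i ∈ range (m+1), ((-1:ℝ)^(i+s) / ((Nat.factorial i) * (Nat.factorial s))) *
        ((m+n).choose (m-i)) * ((n+i).choose (n-s)) * x^s * y^i) * t^m := by
    funext m
    simp only [L2]
    rw [Finset.sum_comm, Finset.sum_mul]
  have hval : ∑ s ∈ range (n+1), ((-1:ℝ)^s * x^s / (Nat.factorial s) / (1-t)^(n+1) *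
      (Real.exp (-(t*y/(1-t))) *
        ∑ j ∈ range (n+1), (n.choose (s+j) : ℝ) * (-(t*y/(1-t)))^j / j.factorial))
      = Real.exp (-t*y/(1-t)) / (1-t)^(n+1) * Lag n 0 (x + t*y/(1-t)) := by
    have harg : -t*y/(1-t) = -(t*y/(1-t)) := by ring
    rw [harg]
    simp only [Lag, Nat.add_zero]
    calc ∑ s ∈ range (n+1), ((-1:ℝ)^s * x^s / (Nat.factorial s) / (1-t)^(n+1) *
        (Real.exp (-(t*y/(1-t))) *
          ∑ j ∈ range (n+1), (n.choose (s+j) : ℝ) * (-(t*y/(1-t)))^j / j.factorial))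
        = Real.exp (-(t*y/(1-t))) / (1-t)^(n+1) * ∑ s ∈ range (n+1),
          ((-1:ℝ)^s * x^s / (Nat.factorial s) *
            ∑ j ∈ range (n+1), (n.choose (s+j) : ℝ) * (-(t*y/(1-t)))^j / j.factorial) := by
          rw [Finset.mul_sum]
          exact Finset.sum_congr rfl fun s _ => by ring
      _ = _ := by rw [poly_id n x (t*y/(1-t))]
  rw [hfun, ← hval]
  exact H
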